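/- Fix N > 0. Let (S, I, R, Q) and (S', I', R', Q') be differentiable functions on an open interval J satisfying the SIR-with-quarantine equations Ṡ = −βSI/N, İ = βSI/N − γI − δI, Ṙ = γI, Q̇ = δI with parameters (β, γ, δ) and (β', γ', δ') respectively, with the same N. Assume β > 0, β' > 0, and for all t ∈ J: I(t) = I'(t) > 0, R(t) = R'(t), Q(t) = Q'(t), S(t) > 0, S'(t) > 0. Then β = β', γ = γ', δ = δ', and S(t) = S'(t) for all t ∈ J. (That is, with outputs I, R, Q measured and known population N, the parameters β, γ, δ are structurally identifiable and the state S is observable.) -/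

import Mathlib

lemma sir7_deriv_eq_of_eqOn {a b t : ℝ} (ht : t ∈ Set.Ioo a b) {f g : ℝ → ℝ} {d e : ℝ}
    (hf : HasDerivAt f d t) (hg : HasDerivAt g e t)
    (h : ∀ s ∈ Set.Ioo a b, f s = g s) : d = e := by
  have hev : (fun s => f s - g s) =ᶠ[nhds t] fun _ => (0 : ℝ) := by
    filter_upwards [Ioo_mem_nhds ht.1 ht.2] with s hs
    simp [h s hs]
  have h0 : HasDerivAt (fun s => f s - g s) 0 t :=
    (hasDerivAt_const t (0 : ℝ)).congr_of_eventuallyEq hev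
  have := (hf.sub hg).unique h0
  linarith

/-- In the SIR model 7 (Zheng) with quarantine, known population `N` and measured outputs
`I, R, Q`, the parameters `β, γ, δ` are structurally identifiable and the state `S` is
observable: any two solutions of `Ṡ = −βSI/N`, `İ = βSI/N − γI − δI`, `Ṙ = γI`, `Q̇ = δI`
on the open interval `(a, b)` with positive transmission rates, equal positive infected
trajectories, equal `R` and `Q` trajectories, and positive susceptible trajectories must
share `β`, `γ`, `δ` and `S`. -/
theorem sir7_identifiable_with_outputs_I_R_Q
    (N β γ δ β' γ' δ' a b : ℝ) (hN : 0 < N) (hab : a < b)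
    (hβ : 0 < β) (hβ' : 0 < β')
    (S I R Q S' I' R' Q' : ℝ → ℝ)
    (hS : ∀ t ∈ Set.Ioo a b, HasDerivAt S (-β * S t * I t / N) t)
    (hI : ∀ t ∈ Set.Ioo a b, HasDerivAt I (β * S t * I t / N - γ * I t - δ * I t) t)
    (hR : ∀ t ∈ Set.Ioo a b, HasDerivAt R (γ * I t) t)
    (hQ : ∀ t ∈ Set.Ioo a b, HasDerivAt Q (δ * I t) t)
    (hS' : ∀ t ∈ Set.Ioo a b, HasDerivAt S' (-β' * S' t * I' t / N) t)
    (hI' : ∀ t ∈ Set.Ioo a b, HasDerivAt I' (β' * S' t * I' t / N - γ' * I' t - δ' * I' t) t)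
    (hR' : ∀ t ∈ Set.Ioo a b, HasDerivAt R' (γ' * I' t) t)
    (hQ' : ∀ t ∈ Set.Ioo a b, HasDerivAt Q' (δ' * I' t) t)
    (houtI : ∀ t ∈ Set.Ioo a b, I t = I' t)
    (hIpos : ∀ t ∈ Set.Ioo a b, 0 < I t)
    (houtR : ∀ t ∈ Set.Ioo a b, R t = R' t)
    (houtQ : ∀ t ∈ Set.Ioo a b, Q t = Q' t)
    (hSpos : ∀ t ∈ Set.Ioo a b, 0 < S t)
    (hSpos' : ∀ t ∈ Set.Ioo a b, 0 < S' t) :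
    β = β' ∧ γ = γ' ∧ δ = δ' ∧ ∀ t ∈ Set.Ioo a b, S t = S' t := by
  have ht0 : (a + b) / 2 ∈ Set.Ioo a b := ⟨by linarith, by linarith⟩
  set t0 := (a + b) / 2
  have hI0 : 0 < I t0 := hIpos t0 ht0
  -- γ = γ'
  have hγ : γ = γ' := by
    have hd := sir7_deriv_eq_of_eqOn ht0 (hR t0 ht0) (hR' t0 ht0) houtR
    rw [← houtI t0 ht0] at hd
    have := mul_right_cancel₀ (ne_of_gt hI0) hd
    exact this
  -- δ = δ'
  have hδ : δ = δ' := by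
    have hd := sir7_deriv_eq_of_eqOn ht0 (hQ t0 ht0) (hQ' t0 ht0) houtQ
    rw [← houtI t0 ht0] at hd
    exact mul_right_cancel₀ (ne_of_gt hI0) hd
  -- β S = β' S' on the interval
  have key : ∀ t ∈ Set.Ioo a b, β * S t = β' * S' t := by
    intro t ht
    have hd := sir7_deriv_eq_of_eqOn ht (hI t ht) (hI' t ht) houtI
    rw [← houtI t ht, hγ, hδ] at hd
    have h1 : β * S t * I t / N = β' * S' t * I t / N := by linarith
    have h2 : β * S t * I t = β' * S' t * I t := by
      have h3 := congrArg (fun z => z * N) h1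
      simpa [div_mul_cancel₀, ne_of_gt hN] using h3
    have := mul_right_cancel₀ (ne_of_gt (hIpos t ht)) h2
    linarith
  -- β = β'
  have hβeq : β = β' := by
    have hfS : HasDerivAt (fun s => β * S s) (β * (-β * S t0 * I t0 / N)) t0 :=
      (hS t0 ht0).const_mul β
    have hfS' : HasDerivAt (fun s => β' * S' s) (β' * (-β' * S' t0 * I' t0 / N)) t0 :=
      (hS' t0 ht0).const_mul β'
    have hd := sir7_deriv_eq_of_eqOn ht0 hfS hfS' key
    rw [← houtI t0 ht0] at hd
    have hN' : (N : ℝ) ≠ 0 := ne_of_gt hN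
    have h1 : β * (β * S t0) * I t0 = β' * (β' * S' t0) * I t0 := by
      have h3 := congrArg (fun z => -z * N) hd
      field_simp at h3
      linear_combination (I t0) * h3
    have h2 : β * (β * S t0) = β' * (β' * S' t0) :=
      mul_right_cancel₀ (ne_of_gt hI0) h1
    rw [← key t0 ht0] at h2
    have hS0 : 0 < β * S t0 := mul_pos hβ (hSpos t0 ht0)
    exact mul_right_cancel₀ (ne_of_gt hS0) h2
  refine ⟨hβeq, hγ, hδ, fun t ht => ?_⟩
  have := key t ht
  rw [← hβeq] at this
  exact mul_left_cancel₀ (ne_of_gt hβ) this
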